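/- Let m = 2 and let d be an integer with q < d ≤ q^2. Set a = ⌊q - d/q⌋ and b = q - d/(q-a) (a real number), and let r be an integer with 1 ≤ r < a - b + 1. Then for every integer i ≥ 1 with ia ≤ q-1, L(d,r,i) = {0,…,q-1-ia}^2; equivalently, the monomial code C_{L(d,r,i)} is the cube code Cube_q(q-1-ia, 2). -/

import Mathlib

open MvPolynomial Finset Pointwise

noncomputable section

/-- Evaluation of a multivariate polynomial at all points of `F^m`. -/
def evalPt {F : Type} [Field F] {m : ℕ} (f : MvPolynomial (Fin m) F) : (Fin m → F) → F :=
  fun P => MvPolynomial.eval P f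

/-- The monomial code `C_A = ev(F_q[A])`, the evaluations of the polynomials
whose monomial support is contained in `A`. -/
def monomialCode (F : Type) [Field F] (m : ℕ) (A : Set (Fin m →₀ ℕ)) :
    Set ((Fin m → F) → F) :=
  { v | ∃ f : MvPolynomial (Fin m) F, (↑f.support : Set (Fin m →₀ ℕ)) ⊆ A ∧ v = evalPt f }

/-- Exponent set of the Reed–Muller code `RM_q(s,m)` (empty when `s < 0`). -/
def RMset (q m : ℕ) (s : ℤ) : Set (Fin m →₀ ℕ) :=
  { i | (∀ j, i j < q) ∧ (∑ j, (i j : ℤ)) ≤ s }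

/-- Exponent set of the hyperbolic code `Hyp_q(d,m)`. -/
def Hypset (q m d : ℕ) : Set (Fin m →₀ ℕ) :=
  { i | (∀ j, i j < q) ∧ d ≤ ∏ j, (q - i j) }

/-- Exponent set of the cube code `Cube_q(s,m)`. -/
def Cubeset (m s : ℕ) : Set (Fin m →₀ ℕ) :=
  { i | ∀ j, i j ≤ s }

/-- Minimum distance of a code: least Hamming weight of a nonzero codeword. -/
def minDist {F : Type} [Field F] [Fintype F] [DecidableEq F] {m : ℕ}
    (C : Set ((Fin m → F) → F)) : ℕ :=
  sInf { w | ∃ v ∈ C, v ≠ 0 ∧ hammingNorm v = w }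

/-- Hamming distance from a word to a code. -/
def distToCode {F : Type} [Field F] [Fintype F] [DecidableEq F] {m : ℕ}
    (y : (Fin m → F) → F) (C : Set ((Fin m → F) → F)) : ℕ :=
  sInf { w | ∃ c ∈ C, hammingDist y c = w }

/-- `i`-fold Minkowski sum of `H` with itself (`0`-fold sum is `{0}`). -/
def iMink {m : ℕ} (H : Set (Fin m →₀ ℕ)) : ℕ → Set (Fin m →₀ ℕ)
  | 0 => {0}
  | i + 1 => iMink H i + H

/-- The sets `L(d,r,i)` from the Geil–Matsumoto list-decoding algorithm. -/
def Lset (q m d r i : ℕ) : Set (Fin m →₀ ℕ) :=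
  { a | (∀ j, a j < q) ∧ ∀ x ∈ iMink (Hypset q m d) i, a + x ∈ Hypset q m (r + 1) }


lemma iMink_bound {H : Set (Fin 2 →₀ ℕ)} {a : ℕ}
    (hH : ∀ y ∈ H, ∀ j, y j ≤ a) :
    ∀ i, ∀ x ∈ iMink H i, ∀ j, x j ≤ i * a := by
  intro i
  induction i with
  | zero =>
    intro x hx j
    simp only [iMink, Set.mem_singleton_iff] at hx
    simp [hx]
  | succ k ih =>
    intro x hx j
    simp only [iMink] at hx
    rw [Set.mem_add] at hx
    obtain ⟨z, hz, y, hy, rfl⟩ := hx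
    have h1 := ih z hz j
    have h2 := hH y hy j
    simp only [Finsupp.add_apply]
    calc z j + y j ≤ k * a + a := Nat.add_le_add h1 h2
      _ = (k + 1) * a := by ring

lemma single_mem_iMink {H : Set (Fin 2 →₀ ℕ)} {j : Fin 2} {a : ℕ}
    (hs : Finsupp.single j a ∈ H) :
    ∀ i, Finsupp.single j (i * a) ∈ iMink H i
  | 0 => by simp [iMink]
  | (k+1) => by
    have ih := single_mem_iMink hs k
    have e : Finsupp.single j ((k+1)*a) = Finsupp.single j (k*a) + Finsupp.single j a := by
      rw [← Finsupp.single_add]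
      congr 1
      ring
    rw [e]
    exact Set.add_mem_add ih hs

lemma keyclaim (d r c : ℕ) (hc : 1 ≤ c) (hrc : (r + c - 1) * c < d)
    (s t : ℕ) (hH : d ≤ (c + s) * (c + t)) :
    r + 1 ≤ (s + 1) * (t + 1) := by
  have hst : s * t ≤ c * (s * t) := Nat.le_mul_of_pos_left _ (by omega)
  have h1 : (c + s) * (c + t) ≤ c * (c + s + t + s * t) := by nlinarith
  have h2 : (r + c - 1) * c < c * (c + s + t + s * t) :=
    lt_of_lt_of_le (lt_of_lt_of_le hrc hH) h1
  rw [mul_comm c] at h2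
  have h3 : r + c - 1 < c + s + t + s * t := lt_of_mul_lt_mul_right h2 (Nat.zero_le c)
  have h4 : (s + 1) * (t + 1) = s * t + s + t + 1 := by ring
  rw [h4]
  generalize s * t = m at h3 ⊢
  omega

/-- for `q < d ≤ q²`, `a = ⌊q - d/q⌋`, `b = q - d/(q-a)`,
`1 ≤ r < a - b + 1` and every `i ≥ 1` with `ia ≤ q-1`,
`L(d,r,i) = {0,…,q-1-ia}²` (the exponent set of `Cube_q(q-1-ia,2)`). -/
theorem statement19 (q d : ℕ) (hq : IsPrimePow q) (hd1 : q < d) (hd2 : d ≤ q ^ 2)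
    (a : ℕ) (ha : a = ⌊(q : ℝ) - (d : ℝ) / (q : ℝ)⌋₊)
    (b : ℝ) (hb : b = (q : ℝ) - (d : ℝ) / ((q : ℝ) - (a : ℝ)))
    (r : ℕ) (hr1 : 1 ≤ r) (hr2 : (r : ℝ) < (a : ℝ) - b + 1)
    (i : ℕ) (hi : 1 ≤ i) (hia : i * a ≤ q - 1) :
    Lset q 2 d r i = Cubeset 2 (q - 1 - i * a) := by
  have hq2 : 2 ≤ q := hq.two_le
  have hq0 : (0:ℝ) < q := by positivity
  have hnn : (0:ℝ) ≤ (q:ℝ) - d / q := by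
    rw [sub_nonneg, div_le_iff₀ hq0]
    have : (d:ℕ) ≤ q * q := by nlinarith [hd2, sq_nonneg q]
    exact_mod_cast this
  have hfl : (a:ℝ) ≤ (q:ℝ) - d / q := ha ▸ Nat.floor_le hnn
  have haq1 : (a:ℝ) < (q:ℝ) - 1 := by
    have hdq : (q:ℝ) + 1 ≤ d := by exact_mod_cast hd1
    have h1 : (1:ℝ) < (d:ℝ)/q := by rw [lt_div_iff₀ hq0]; linarith
    linarith
  have ha1q : a + 1 < q := by
    have : ((a:ℝ)) + 1 < q := by linarith
    exact_mod_cast this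
  set c := q - a with hc
  have hc1 : 1 ≤ c := by omega
  have hcR : (c:ℝ) = (q:ℝ) - a := by
    rw [hc, Nat.cast_sub (by omega : a ≤ q)]
  have hcpos : (0:ℝ) < c := by rw [hcR]; linarith
  have hdcq : d ≤ c * q := by
    have h2 : (d:ℝ)/q ≤ (q:ℝ) - a := by linarith
    rw [div_le_iff₀ hq0] at h2
    have h3 : (d:ℝ) ≤ (c:ℝ) * q := by rw [hcR]; linarith
    exact_mod_cast h3
  have hrcd : (r + c - 1) * c < d := by
    have h1 : (r:ℝ) < (d:ℝ)/c - c + 1 := by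
      have h := hr2
      rw [hb] at h
      rw [show (q:ℝ) - a = c from hcR.symm] at h
      linarith [hcR]
    have h2 : ((r:ℝ) + c - 1) * c < d := by
      have h2' : (r:ℝ) + c - 1 < d/c := by linarith
      calc ((r:ℝ) + c - 1) * c < (d/c) * c := by
            exact mul_lt_mul_of_pos_right h2' hcpos
        _ = d := by field_simp
    have h3 : (((r + c - 1 : ℕ)):ℝ) * c < d := by
      rw [Nat.cast_sub (by omega : 1 ≤ r + c)]
      push_cast
      convert h2 using 2
    exact_mod_cast h3
  have hcomp : ∀ y ∈ Hypset q 2 d, y 0 ≤ a ∧ y 1 ≤ a := by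
    intro y hy
    obtain ⟨hylt, hyprod⟩ := hy
    rw [Fin.prod_univ_two] at hyprod
    have key : ∀ u : ℕ, u < q → d ≤ (q - u) * q → u ≤ a := by
      intro u hu hd'
      rw [ha]
      apply Nat.le_floor
      have e : ((q - u : ℕ):ℝ) = (q:ℝ) - u := by rw [Nat.cast_sub hu.le]
      have h1 : (d:ℝ) ≤ ((q:ℝ) - u) * q := by
        rw [← e]; exact_mod_cast hd'
      have h2 : (d:ℝ)/q ≤ (q:ℝ) - u := by rw [div_le_iff₀ hq0]; linarith
      linarith
    constructor
    · exact key _ (hylt 0)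
        (le_trans hyprod (Nat.mul_le_mul_left _ (Nat.sub_le _ _)))
    · refine key _ (hylt 1) (le_trans hyprod ?_)
      calc (q - y 0) * (q - y 1) ≤ q * (q - y 1) :=
            Nat.mul_le_mul_right _ (Nat.sub_le _ _)
        _ = (q - y 1) * q := mul_comm _ _
  have hsingle : ∀ j : Fin 2, Finsupp.single j a ∈ Hypset q 2 d := by
    intro j
    constructor
    · intro j'
      rcases eq_or_ne j j' with rfl | hne
      · simpa [Finsupp.single_eq_same] using (by omega : a < q)
      · simp [Finsupp.single_eq_of_ne' hne]
        omega
    · rw [Fin.prod_univ_two]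
      rcases (by decide : ∀ j : Fin 2, j = 0 ∨ j = 1) j with rfl | rfl
      · rw [Finsupp.single_eq_same, Finsupp.single_eq_of_ne' (by decide : (0:Fin 2) ≠ 1)]
        simpa using hdcq
      · rw [Finsupp.single_eq_same, Finsupp.single_eq_of_ne' (by decide : (1:Fin 2) ≠ 0)]
        simpa [mul_comm] using hdcq
  ext v
  constructor
  · rintro ⟨hvlt, hall⟩
    intro j
    fin_cases j
    · have hm := hall _ (single_mem_iMink (hsingle 0) i)
      have h1 := hm.1 0
      simp only [Finsupp.add_apply, Finsupp.single_eq_same] at h1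
      show v 0 ≤ q - 1 - i * a
      generalize i * a = M at h1 hia ⊢
      omega
    · have hm := hall _ (single_mem_iMink (hsingle 1) i)
      have h1 := hm.1 1
      simp only [Finsupp.add_apply, Finsupp.single_eq_same] at h1
      show v 1 ≤ q - 1 - i * a
      generalize i * a = M at h1 hia ⊢
      omega
  · intro hcube
    have hvb : ∀ j, v j ≤ q - 1 - i * a := hcube
    constructor
    · intro j
      have h1 := hvb j
      generalize i * a = M at h1 hia
      omega
    · intro x hx
      obtain ⟨k, rfl⟩ : ∃ k, i = k + 1 := ⟨i - 1, by omega⟩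
      simp only [iMink] at hx
      rw [Set.mem_add] at hx
      obtain ⟨z, hz, y, hy, rfl⟩ := hx
      have hHbd : ∀ y' ∈ Hypset q 2 d, ∀ j, y' j ≤ a := by
        intro y' hy' j
        rcases hcomp y' hy' with ⟨h0, h1⟩
        fin_cases j
        · exact h0
        · exact h1
      have hz0 : z 0 ≤ k * a := iMink_bound hHbd k z hz 0
      have hz1 : z 1 ≤ k * a := iMink_bound hHbd k z hz 1
      obtain ⟨hy0, hy1⟩ := hcomp y hy
      obtain ⟨hylt, hyprod⟩ := hy
      rw [Fin.prod_univ_two] at hyprod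
      have e0 : q - y 0 = c + (a - y 0) := by omega
      have e1 : q - y 1 = c + (a - y 1) := by omega
      rw [e0, e1] at hyprod
      have hkey := keyclaim d r c hc1 hrcd _ _ hyprod
      have hv0 := hvb 0
      have hv1 := hvb 1
      have hma : (k + 1) * a = k * a + a := by ring
      rw [hma] at hia hv0 hv1
      constructor
      · intro j
        simp only [Finsupp.add_apply]
        fin_cases j
        · show v 0 + (z 0 + y 0) < q
          generalize k * a = M at hia hv0 hz0
          omega
        · show v 1 + (z 1 + y 1) < q
          generalize k * a = M at hia hv1 hz1
          omega
      · rw [Fin.prod_univ_two]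
        simp only [Finsupp.add_apply]
        have A0 : a - y 0 + 1 ≤ q - (v 0 + (z 0 + y 0)) := by
          generalize k * a = M at hia hv0 hz0
          omega
        have A1 : a - y 1 + 1 ≤ q - (v 1 + (z 1 + y 1)) := by
          generalize k * a = M at hia hv1 hz1
          omega
        calc r + 1 ≤ (a - y 0 + 1) * (a - y 1 + 1) := hkey
          _ ≤ (q - (v 0 + (z 0 + y 0))) * (q - (v 1 + (z 1 + y 1))) :=
            Nat.mul_le_mul A0 A1
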